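/- arXiv:1606.08897 — 2 statements merged into one kernel-verified Lean document; each statement's English description precedes it below -/
import Mathlib

section
/- Let F be a self-adjoint operator with F² = 1 on a Hilbert module, and P a projection commuting with a grading operator. Then the following identities hold: (a) F[F,P] = −[F,P]F; (b) P[F,P] = [F,P](1−P); (c) P[F,P]² = PFPFP − P; and consequently, with S_± = ½(P ± S'), F'_{±∓} = S_± PFP S_∓, for every m ≥ 0: (S_+ − F'_{+−}F'_{−+})^{m+1} = (−1)^{m+1} S_+ [F,P]^{2m+2} S_+. -/
/-- Let `F` be a self-adjoint operator with `F² = 1`, `P` a projection, and `S'` a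
self-adjoint unitary of the corner `P·P` (i.e. `S'² = P`, `S'P = PS' = S'`) anticommuting
with `F' = PFP`.  With `S_± = ½(P ± S')` and `F'_{±∓} = S_± F' S_∓`, the following exact
identities hold (commutators are `[x,y] = xy − yx`):
(a) `F[F,P] = −[F,P]F`;  (b) `P[F,P] = [F,P](1−P)`;  (c) `P[F,P]² = PFPFP − P`;  and for
every `m ≥ 0`, `(S₊ − F'₊₋F'₋₊)^{m+1} = (−1)^{m+1} S₊ [F,P]^{2m+2} S₊`. -/
theorem graded_fedosov_corner_identities
    {A : Type*} [Ring A] [StarRing A] [Algebra ℂ A] [StarModule ℂ A]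
    (F P S' : A)
    (hFsa : star F = F) (hF2 : F * F = 1)
    (hPidem : P * P = P) (hPsa : star P = P)
    (hS'sa : star S' = S') (hS'2 : S' * S' = P)
    (hS'P : S' * P = S') (hPS' : P * S' = S')
    (hanti : S' * (P * F * P) = -((P * F * P) * S')) :
    F * (F * P - P * F) = -((F * P - P * F) * F) ∧
    P * (F * P - P * F) = (F * P - P * F) * (1 - P) ∧
    P * ((F * P - P * F) * (F * P - P * F)) = P * F * P * F * P - P ∧
    ∀ m : ℕ,
      ((2 : ℂ)⁻¹ • (P + S') -
          (((2 : ℂ)⁻¹ • (P + S')) * (P * F * P) * ((2 : ℂ)⁻¹ • (P - S'))) *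
            (((2 : ℂ)⁻¹ • (P - S')) * (P * F * P) * ((2 : ℂ)⁻¹ • (P + S')))) ^ (m + 1)
        = ((-1 : ℂ) ^ (m + 1)) •
            (((2 : ℂ)⁻¹ • (P + S')) * (F * P - P * F) ^ (2 * m + 2) *
              ((2 : ℂ)⁻¹ • (P + S'))) := by
  have hF2' : ∀ x : A, F * (F * x) = x := fun x => by rw [← mul_assoc, hF2, one_mul]
  have hP2' : ∀ x : A, P * (P * x) = P * x := fun x => by rw [← mul_assoc, hPidem]
  refine ⟨?_, ?_, ?_, ?_⟩
  · simp only [mul_sub, sub_mul, neg_sub, mul_assoc, hF2', hF2, mul_one]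
  · simp only [mul_sub, sub_mul, mul_one, mul_assoc, hP2', hPidem]
    abel
  · simp only [mul_sub, sub_mul, mul_assoc, hP2', hF2', hPidem]
    abel
  · obtain ⟨sp, hsp⟩ : ∃ x : A, x = (2 : ℂ)⁻¹ • (P + S') := ⟨_, rfl⟩
    obtain ⟨sm, hsm⟩ : ∃ x : A, x = (2 : ℂ)⁻¹ • (P - S') := ⟨_, rfl⟩
    obtain ⟨F', hF'⟩ : ∃ x : A, x = P * F * P := ⟨_, rfl⟩
    obtain ⟨Q, hQ⟩ : ∃ x : A, x = (F * P - P * F) * (F * P - P * F) := ⟨_, rfl⟩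
    -- basic corner facts
    have hPF' : P * F' = F' := by rw [hF', ← mul_assoc, ← mul_assoc, hPidem]
    have hF'P : F' * P = F' := by rw [hF', mul_assoc, mul_assoc, hPidem, ← mul_assoc]
    have hS'F' : S' * F' = -(F' * S') := by rw [hF']; exact hanti
    have hPsp : P * sp = sp := by
      rw [hsp, mul_smul_comm, mul_add, hPidem, hPS']
    have hspsp : sp * sp = sp := by
      rw [hsp, smul_mul_assoc, add_mul, ← hsp, hPsp]
      have hS'sp : S' * sp = sp := by
        rw [hsp, mul_smul_comm, mul_add, hS'P, hS'2, add_comm]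
      rw [hS'sp, ← two_smul ℂ sp, smul_smul, inv_mul_cancel₀ (two_ne_zero), one_smul]
    have hsmsm : sm * sm = sm := by
      have hPsm : P * sm = sm := by rw [hsm, mul_smul_comm, mul_sub, hPidem, hPS']
      rw [hsm, smul_mul_assoc, sub_mul, ← hsm, hPsm]
      have hS'sm : S' * sm = -sm := by
        rw [hsm, mul_smul_comm, mul_sub, hS'P, hS'2, ← smul_neg, neg_sub]
      rw [hS'sm, sub_neg_eq_add, ← two_smul ℂ sm, smul_smul, inv_mul_cancel₀ (two_ne_zero), one_smul]
    have hspF' : sp * F' = F' * sm := by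
      rw [hsp, hsm, smul_mul_assoc, mul_smul_comm, add_mul, mul_sub, hPF', hS'F', hF'P]
      rw [sub_eq_add_neg]
    have hsmF' : sm * F' = F' * sp := by
      rw [hsp, hsm, smul_mul_assoc, mul_smul_comm, sub_mul, mul_add, hPF', hS'F', hF'P]
      rw [sub_neg_eq_add]
    -- part (c)-style facts
    have hPQ : P * Q = F' * F' - P := by
      rw [hQ, hF']
      simp only [mul_sub, sub_mul, mul_assoc, hP2', hF2', hPidem]
      abel
    have hQP : Q * P = F' * F' - P := by
      rw [hQ, hF']
      simp only [mul_sub, sub_mul, mul_assoc, hP2', hF2', hPidem, hF2, mul_one]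
      abel
    have hS'Q : S' * Q = Q * S' := by
      have h1 : S' * Q = S' * P * Q := by rw [hS'P]
      have h2 : Q * S' = Q * (P * S') := by rw [hPS']
      rw [h1, mul_assoc S' P Q, hPQ, h2, ← mul_assoc Q P S', hQP, mul_sub, sub_mul,
        hS'P, hPS', ← mul_assoc S' F' F', hS'F', neg_mul, mul_assoc F' S' F', hS'F',
        mul_neg, neg_neg, mul_assoc F' F' S']
    have hPQc : P * Q = Q * P := by rw [hPQ, hQP]
    have hspQ : sp * Q = Q * sp := by
      rw [hsp, smul_mul_assoc, mul_smul_comm, add_mul, mul_add, hPQc, hS'Q]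
    -- the key reduction
    have hQsp : Q * sp = F' * (F' * sp) - sp := by
      calc Q * sp = Q * (P * sp) := by rw [hPsp]
      _ = (Q * P) * sp := by rw [mul_assoc Q P sp]
      _ = F' * (F' * sp) - sp := by rw [hQP, sub_mul, hPsp, mul_assoc F' F' sp]
    have hX : sp - sp * F' * sm * (sm * F' * sp) = -(Q * sp) := by
      have h1 : sp * F' * sm * (sm * F' * sp) = F' * (F' * sp) := by
        rw [hspF', hsmF']
        calc F' * sm * sm * (F' * sp * sp)
            = F' * (sm * sm) * (F' * (sp * sp)) := by
              rw [mul_assoc F' sm sm, mul_assoc F' sp sp]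
          _ = F' * sm * (F' * sp) := by rw [hsmsm, hspsp]
          _ = F' * (sm * F') * sp := by
              rw [mul_assoc F' sm (F' * sp), ← mul_assoc sm F' sp,
                mul_assoc F' (sm * F') sp]
          _ = F' * (F' * sp) * sp := by rw [hsmF']
          _ = F' * (F' * (sp * sp)) := by
              rw [mul_assoc F' (F' * sp) sp, mul_assoc F' sp sp]
          _ = F' * (F' * sp) := by rw [hspsp]
      rw [h1, hQsp, neg_sub]
    -- powers
    have hsppow : ∀ n : ℕ, sp ^ (n + 1) = sp := by
      intro n
      induction n with
      | zero => simp
      | succ k ih => rw [pow_succ, ih, hspsp]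
    have hcommQ : Commute Q sp := hspQ.symm
    intro m
    rw [← hsp, ← hsm, ← hF', hX]
    have e1 : (F * P - P * F) ^ (2 * m + 2) = Q ^ (m + 1) := by
      rw [show 2 * m + 2 = 2 * (m + 1) by ring, pow_mul, sq, ← hQ]
    rw [e1]
    calc (-(Q * sp)) ^ (m + 1)
        = ((-1 : ℂ) • (Q * sp)) ^ (m + 1) := by rw [neg_one_smul]
      _ = ((-1 : ℂ) ^ (m + 1)) • (Q * sp) ^ (m + 1) := by rw [smul_pow]
      _ = ((-1 : ℂ) ^ (m + 1)) • (Q ^ (m + 1) * sp ^ (m + 1)) := by rw [hcommQ.mul_pow]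
      _ = ((-1 : ℂ) ^ (m + 1)) • (Q ^ (m + 1) * sp) := by rw [hsppow]
      _ = ((-1 : ℂ) ^ (m + 1)) • (sp * Q ^ (m + 1) * sp) := by
          rw [← (hcommQ.pow_left (m + 1)).eq, mul_assoc (Q ^ (m+1)) sp sp, hspsp]
end

section
/- Generalized Calderón–Fedosov formula: let B be an ungraded unital C*-algebra with a continuous normalized trace, and T ∈ B(H_B) with ‖T‖ ≤ 1 admitting a polar decomposition T = W|T| with W a partial isometry satisfying W*W|T| = |T|W*W = |T|. If (1 − T*T)^n and (1 − TT*)^n lie in S₁(H_B) (trace class for the induced trace Tr), then Tr((1 − T*T)^n) − Tr((1 − TT*)^n) = Tr(1 − W*W) − Tr(1 − WW*). -/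
/-- Generalized Calderón–Fedosov formula.  Let `A = B(H_B)` be the adjointable operators on
the standard Hilbert module over a unital C*-algebra with trace (here modelled as an
arbitrary unital C*-algebra `A`), `S₁` the trace ideal of the induced trace `τ = Tr`, which
is tracial whenever one of the factors lies in `S₁`.  Let `T ∈ A` with `‖T‖ ≤ 1` admit a
polar decomposition `T = W|T|`, `W` a partial isometry with `W*W|T| = |T|W*W = |T|`.  If
`(1 − T*T)ⁿ` and `(1 − TT*)ⁿ` lie in `S₁`, then
`Tr((1 − T*T)ⁿ) − Tr((1 − TT*)ⁿ) = Tr(1 − W*W) − Tr(1 − WW*)`. -/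
theorem generalized_calderon_fedosov
    {A : Type*} [NormedRing A] [StarRing A] [CStarRing A]
    [NormedAlgebra ℂ A] [CompleteSpace A]
    (S1 : TwoSidedIdeal A) (Tr : A →ₗ[ℂ] ℂ)
    (htr : ∀ s t : A, s ∈ S1 → Tr (s * t) = Tr (t * s))
    (T W R : A) (hTnorm : ‖T‖ ≤ 1)
    (hTWR : T = W * R) (hRsa : star R = R) (hR2 : R * R = star T * T)
    (hWpi : W * star W * W = W)
    (hWR : star W * W * R = R) (hRW : R * (star W * W) = R)
    (n : ℕ) (hn : 1 ≤ n)
    (h1 : (1 - star T * T) ^ n ∈ S1) (h2 : (1 - T * star T) ^ n ∈ S1) :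
    Tr ((1 - star T * T) ^ n) - Tr ((1 - T * star T) ^ n)
      = Tr (1 - star W * W) - Tr (1 - W * star W) := by
  have hT' : star T = R * star W := by rw [hTWR, star_mul, hRsa]
  -- right-associated versions of the hypotheses
  have a1 : ∀ x : A, W * (star W * (W * x)) = W * x := by
    intro x; rw [← mul_assoc, ← mul_assoc, hWpi]
  have a2 : ∀ x : A, star W * (W * (R * x)) = R * x := by
    intro x; rw [← mul_assoc, ← mul_assoc, hWR]
  have a3 : ∀ x : A, R * (star W * (W * x)) = R * x := by
    intro x; rw [← mul_assoc, ← mul_assoc, mul_assoc R, hRW]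
  have a1' : W * (star W * W) = W := by rw [← mul_assoc, hWpi]
  have a2' : star W * (W * R) = R := by rw [← mul_assoc, hWR]
  have a3' : R * (star W * W) = R := hRW
  -- main algebraic identity: (1 - T T*)^(m+1) = 1 - W W* + W (1 - T* T)^(m+1) W*
  have M : ∀ m : ℕ, (1 - T * star T) ^ (m + 1)
      = 1 - W * star W + W * (1 - star T * T) ^ (m + 1) * star W := by
    intro m
    induction m with
    | zero =>
      simp only [zero_add, pow_one]
      simp only [← hR2]; simp only [hT']; simp only [hTWR]
      simp only [mul_sub, sub_mul, mul_add, add_mul, mul_one, one_mul, mul_assoc, a1, a2, a3, a1', a2', a3']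
      abel
    | succ k ih =>
      rw [pow_succ, ih, pow_succ (1 - star T * T) (k + 1)]
      simp only [← hR2]; simp only [hT']; simp only [hTWR]
      simp only [mul_sub, sub_mul, mul_add, add_mul, mul_one, one_mul, mul_assoc, a1, a2, a3, a1', a2', a3']
      abel
  -- (1 - T* T)^m * (1 - W* W) = 1 - W* W
  have L : ∀ m : ℕ, (1 - star T * T) ^ m * (1 - star W * W) = 1 - star W * W := by
    intro m
    induction m with
    | zero => rw [pow_zero, one_mul]
    | succ k ih =>
      rw [pow_succ, mul_assoc]
      have : (1 - star T * T) * (1 - star W * W) = 1 - star W * W := by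
        simp only [← hR2]
        simp only [mul_sub, sub_mul, mul_add, add_mul, mul_one, one_mul, mul_assoc, a1, a2, a3, a1', a2', a3']
        abel
      rw [this, ih]
  obtain ⟨m, rfl⟩ : ∃ m, n = m + 1 := ⟨n - 1, (Nat.succ_pred_eq_of_pos hn).symm⟩
  -- trace computation
  have hmem : (1 - star T * T) ^ (m + 1) * star W ∈ S1 := S1.mul_mem_right _ _ h1
  have ht1 : Tr (((1 - star T * T) ^ (m + 1) * star W) * W)
      = Tr (W * ((1 - star T * T) ^ (m + 1) * star W)) := htr _ _ hmem
  have hWXW : Tr (W * (1 - star T * T) ^ (m + 1) * star W)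
      = Tr ((1 - star T * T) ^ (m + 1)) - Tr (1 - star W * W) := by
    rw [mul_assoc, ← ht1, mul_assoc]
    have hkey : (1 - star T * T) ^ (m + 1) * (star W * W)
        = (1 - star T * T) ^ (m + 1) - (1 - star W * W) := by
      rw [← L (m + 1), mul_sub, mul_one]; abel
    rw [hkey, map_sub]
  have := M m
  calc Tr ((1 - star T * T) ^ (m + 1)) - Tr ((1 - T * star T) ^ (m + 1))
      = Tr ((1 - star T * T) ^ (m + 1))
        - Tr (1 - W * star W + W * (1 - star T * T) ^ (m + 1) * star W) := by rw [← M m]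
    _ = Tr ((1 - star T * T) ^ (m + 1)) - (Tr (1 - W * star W)
        + (Tr ((1 - star T * T) ^ (m + 1)) - Tr (1 - star W * W))) := by
        rw [map_add, hWXW]
    _ = Tr (1 - star W * W) - Tr (1 - W * star W) := by ring
end
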